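/- Let λ₄, λ₆, λ₈, λ₁₀ ∈ ℂ and let U : ℝ → ℂ be a three-times differentiable function satisfying the two equations U'U''' − ½(U'')² − 5U(U')² + (5/2)U⁴ + 4λ₄U² − 16λ₆U + 8λ₄² − 32λ₈ = 0 and (U''')² − 10U(U'')² + 2(U')²U'' + 4(5U³ + 4λ₄U − 8λ₆)U'' − 2(15U² + 4λ₄)(U')² + B(U) = 0, where B(U) = 6U⁵ + 16λ₄U³ − 96λ₆U² + 96(λ₄² − 4λ₈)U + 128λ₄λ₆ − 256λ₁₀. Then U satisfies the relation (U'')⁴ − 20U(U')²(U'')² − A₁(U)(U'')² + 8(U')⁴U'' + A₂(U)(U')²U'' − A₃(U)(U')⁴ − A₄(U)(U')² + A₅(U) = 0, where A₁(U) = 10U⁴ + 16λ₄U² − 64λ₆U + 32λ₄² − 128λ₈, A₂(U) = 80U³ + 64λ₄U − 128λ₆, A₃(U) = 20U² + 32λ₄, A₄(U) = 76U⁵ + 96λ₄U³ − 256λ₆U² − 64(λ₄² − 4λ₈)U − 512λ₄λ₆ + 1024λ₁₀, and A₅(U) = (5U⁴ + 8λ₄U² − 32λ₆U + 16λ₄²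 − 64λ₈)². -/
import Mathlib

/-- If a three-times differentiable `U : ℝ → ℂ` satisfies the two equations
`U'U''' − ½(U'')² − 5U(U')² + (5/2)U⁴ + 4λ₄U² − 16λ₆U + 8λ₄² − 32λ₈ = 0` and
`(U''')² − 10U(U'')² + 2(U')²U'' + 4(5U³ + 4λ₄U − 8λ₆)U'' − 2(15U² + 4λ₄)(U')² + B(U) = 0`,
then `U` satisfies
`(U'')⁴ − 20U(U')²(U'')² − A₁(U)(U'')² + 8(U')⁴U'' + A₂(U)(U')²U'' − A₃(U)(U')⁴`
`− A₄(U)(U')² + A₅(U) = 0`. -/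
theorem quartic_relation_in_second_derivative (lam4 lam6 lam8 lam10 : ℂ) (U : ℝ → ℂ)
    (hU : ContDiff ℝ 3 U)
    (h1 : ∀ t, deriv U t * iteratedDeriv 3 U t - 1/2 * (iteratedDeriv 2 U t) ^ 2
      - 5 * U t * (deriv U t) ^ 2 + 5/2 * (U t) ^ 4 + 4 * lam4 * (U t) ^ 2
      - 16 * lam6 * U t + 8 * lam4 ^ 2 - 32 * lam8 = 0)
    (h2 : ∀ t, (iteratedDeriv 3 U t) ^ 2 - 10 * U t * (iteratedDeriv 2 U t) ^ 2
      + 2 * (deriv U t) ^ 2 * iteratedDeriv 2 U t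
      + 4 * (5 * (U t) ^ 3 + 4 * lam4 * U t - 8 * lam6) * iteratedDeriv 2 U t
      - 2 * (15 * (U t) ^ 2 + 4 * lam4) * (deriv U t) ^ 2
      + (6 * (U t) ^ 5 + 16 * lam4 * (U t) ^ 3 - 96 * lam6 * (U t) ^ 2
        + 96 * (lam4 ^ 2 - 4 * lam8) * U t + 128 * lam4 * lam6 - 256 * lam10) = 0) :
    ∀ t, (iteratedDeriv 2 U t) ^ 4
      - 20 * U t * (deriv U t) ^ 2 * (iteratedDeriv 2 U t) ^ 2
      - (10 * (U t) ^ 4 + 16 * lam4 * (U t) ^ 2 - 64 * lam6 * U t + 32 * lam4 ^ 2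
        - 128 * lam8) * (iteratedDeriv 2 U t) ^ 2
      + 8 * (deriv U t) ^ 4 * iteratedDeriv 2 U t
      + (80 * (U t) ^ 3 + 64 * lam4 * U t - 128 * lam6) * (deriv U t) ^ 2
        * iteratedDeriv 2 U t
      - (20 * (U t) ^ 2 + 32 * lam4) * (deriv U t) ^ 4
      - (76 * (U t) ^ 5 + 96 * lam4 * (U t) ^ 3 - 256 * lam6 * (U t) ^ 2
        - 64 * (lam4 ^ 2 - 4 * lam8) * U t - 512 * lam4 * lam6 + 1024 * lam10)
        * (deriv U t) ^ 2
      + (5 * (U t) ^ 4 + 8 * lam4 * (U t) ^ 2 - 32 * lam6 * U t + 16 * lam4 ^ 2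
        - 64 * lam8) ^ 2 = 0 := by
  intro t
  linear_combination
    (-4 * (deriv U t * iteratedDeriv 3 U t + 1/2 * (iteratedDeriv 2 U t) ^ 2
      + 5 * U t * (deriv U t) ^ 2 - 5/2 * (U t) ^ 4 - 4 * lam4 * (U t) ^ 2
      + 16 * lam6 * U t - 8 * lam4 ^ 2 + 32 * lam8)) * h1 t
    + 4 * (deriv U t) ^ 2 * h2 t
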